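/- Let f : ℝ^d → ℝ be differentiable with ∇f Lipschitz of constant L, and let Φ : Ω → Ω satisfy ‖Φ(x) - x‖₂ ≤ δ and ‖DΦ(x) - I‖ ≤ η (operator norm) for all x in open Ω ⊂ ℝ^d, with Φ differentiable. Then for every x ∈ Ω, ‖∇(f ∘ Φ)(x) - ∇f(x)‖₂ ≤ (1+η) L δ + η ‖∇f(x)‖₂. -/

import Mathlib

open scoped NNReal

theorem stmt_6 (d : ℕ) (Ω : Set (EuclideanSpace ℝ (Fin d))) (hΩ : IsOpen Ω)
    (f : EuclideanSpace ℝ (Fin d) → ℝ) (hf : Differentiable ℝ f)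
    (L : ℝ≥0) (hgrad : LipschitzWith L (gradient f))
    (Φ : EuclideanSpace ℝ (Fin d) → EuclideanSpace ℝ (Fin d))
    (hΦmaps : Set.MapsTo Φ Ω Ω)
    (hΦdiff : ∀ x ∈ Ω, DifferentiableAt ℝ Φ x)
    (δ η : ℝ) (hδ : 0 ≤ δ) (hη : 0 ≤ η)
    (hΦδ : ∀ x ∈ Ω, ‖Φ x - x‖ ≤ δ)
    (hΦη : ∀ x ∈ Ω, ‖fderiv ℝ Φ x - ContinuousLinearMap.id ℝ _‖ ≤ η) :
    ∀ x ∈ Ω, ‖gradient (f ∘ Φ) x - gradient f x‖ ≤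
      (1 + η) * (L : ℝ) * δ + η * ‖gradient f x‖ := by
  intro x hx

  set A := fderiv ℝ f (Φ x) with hA
  set D := fderiv ℝ Φ x with hD
  set B := fderiv ℝ f x with hB
  have hcomp : fderiv ℝ (f ∘ Φ) x = A.comp D :=
    fderiv_comp x (hf _) (hΦdiff x hx)
  have key : gradient (f ∘ Φ) x - gradient f x =
      (InnerProductSpace.toDual ℝ (EuclideanSpace ℝ (Fin d))).symm (A.comp D - B) := by
    simp [gradient, hcomp, map_sub, hB]
  rw [key, LinearIsometryEquiv.norm_map]
  have hAB : ‖A - B‖ ≤ (L : ℝ) * δ := by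
    have h1 : ‖A - B‖ = ‖gradient f (Φ x) - gradient f x‖ := by
      rw [show gradient f (Φ x) - gradient f x
          = (InnerProductSpace.toDual ℝ (EuclideanSpace ℝ (Fin d))).symm (A - B) by simp [gradient, map_sub, hA, hB],
        LinearIsometryEquiv.norm_map]
    rw [h1]
    calc ‖gradient f (Φ x) - gradient f x‖ ≤ (L : ℝ) * ‖Φ x - x‖ := by
          simpa [dist_eq_norm] using hgrad.dist_le_mul (Φ x) x
      _ ≤ (L : ℝ) * δ := by
          exact mul_le_mul_of_nonneg_left (hΦδ x hx) L.coe_nonneg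
  have hBnorm : ‖B‖ = ‖gradient f x‖ := by
    rw [show gradient f x = (InnerProductSpace.toDual ℝ (EuclideanSpace ℝ (Fin d))).symm B from rfl,
      LinearIsometryEquiv.norm_map]
  have hAnorm : ‖A‖ ≤ ‖gradient f x‖ + (L : ℝ) * δ := by
    calc ‖A‖ = ‖A - B + B‖ := by rw [sub_add_cancel]
      _ ≤ ‖A - B‖ + ‖B‖ := norm_add_le _ _
      _ ≤ (L : ℝ) * δ + ‖gradient f x‖ := by rw [hBnorm]; exact add_le_add_left hAB _
      _ = _ := by ring
  have hsplit : A.comp D - B = A.comp (D - ContinuousLinearMap.id ℝ (EuclideanSpace ℝ (Fin d))) + (A - B) := by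
    simp [ContinuousLinearMap.comp_sub]
  rw [hsplit]
  calc ‖A.comp (D - ContinuousLinearMap.id ℝ (EuclideanSpace ℝ (Fin d))) + (A - B)‖
      ≤ ‖A.comp (D - ContinuousLinearMap.id ℝ (EuclideanSpace ℝ (Fin d)))‖ + ‖A - B‖ := norm_add_le _ _
    _ ≤ ‖A‖ * ‖D - ContinuousLinearMap.id ℝ (EuclideanSpace ℝ (Fin d))‖ + (L : ℝ) * δ :=
        add_le_add (ContinuousLinearMap.opNorm_comp_le _ _) hAB
    _ ≤ (‖gradient f x‖ + (L : ℝ) * δ) * η + (L : ℝ) * δ := by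
        refine add_le_add_left ?_ _
        exact mul_le_mul hAnorm (hΦη x hx) (norm_nonneg _) (by positivity)
    _ = (1 + η) * (L : ℝ) * δ + η * ‖gradient f x‖ := by ring
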